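/- Let p be a prime, 2n = l·p^t with p ∤ l. The set of p-regular elements of the dicyclic group T_{4n} is {r^{jp^t}, sr^k : 0 ≤ j < l, 1 ≤ k ≤ 2n} if p ≠ 2, and {r^{jp^t} : 0 ≤ j < l} if p = 2. (An element is p-regular iff its order is not divisible by p; note each sr^k has order 4.) -/

import Mathlib

lemma key9 (p l t v : ℕ) (hp : p.Prime) (hpl : ¬ p ∣ l) (hl : 0 < l) :
    ¬ p ∣ (l * p ^ t / Nat.gcd (l * p ^ t) v) ↔ p ^ t ∣ v := by
  set d := l * p ^ t with hd
  have hd0 : d ≠ 0 := Nat.mul_ne_zero hl.ne' (pow_ne_zero _ hp.pos.ne')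
  set g := Nat.gcd d v with hg
  have hg0 : g ≠ 0 := fun h => hd0 (Nat.eq_zero_of_gcd_eq_zero_left h)
  have hgd : g ∣ d := Nat.gcd_dvd_left _ _
  have hq0 : d / g ≠ 0 := Nat.div_ne_zero_iff.2 ⟨hg0, Nat.le_of_dvd (Nat.pos_of_ne_zero hd0) hgd⟩
  have hdfact : d.factorization p = t := by
    rw [hd, Nat.factorization_mul hl.ne' (pow_ne_zero _ hp.pos.ne'), Nat.Prime.factorization_pow hp]
    simp [Nat.factorization_eq_zero_of_not_dvd hpl]
  have hgt : g.factorization p ≤ t := by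
    rw [← hdfact]
    exact (Nat.factorization_le_iff_dvd hg0 hd0).2 hgd p
  constructor
  · intro h
    have h1 : (d / g).factorization p = 0 := Nat.factorization_eq_zero_of_not_dvd h
    rw [Nat.factorization_div hgd] at h1
    simp only [Finsupp.coe_tsub, Pi.sub_apply, hdfact] at h1
    have ht : t ≤ g.factorization p := by omega
    have : p ^ t ∣ g := (Nat.Prime.pow_dvd_iff_le_factorization hp hg0).2 ht
    exact this.trans (Nat.gcd_dvd_right _ _)
  · intro h
    have hpg : p ^ t ∣ g := Nat.dvd_gcd ⟨l, by ring⟩ h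
    have ht : t ≤ g.factorization p := (Nat.Prime.pow_dvd_iff_le_factorization hp hg0).1 hpg
    intro hc
    have h1 : 1 ≤ (d / g).factorization p := (Nat.Prime.dvd_iff_one_le_factorization hp hq0).1 hc
    rw [Nat.factorization_div hgd] at h1
    simp only [Finsupp.coe_tsub, Pi.sub_apply, hdfact] at h1
    omega

theorem stmt9 (n p l t : ℕ) (hn : 0 < n) (hp : p.Prime) (hpl : ¬ p ∣ l)
    (h2n : 2 * n = l * p ^ t) :
    (p ≠ 2 → {g : QuaternionGroup n | ¬ p ∣ orderOf g} =
        {g : QuaternionGroup n |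
            ∃ j : ℕ, j < l ∧ g = QuaternionGroup.a ((j * p ^ t : ℕ) : ZMod (2 * n))} ∪
          {g : QuaternionGroup n | ∃ i : ZMod (2 * n), g = QuaternionGroup.xa i}) ∧
    (p = 2 → {g : QuaternionGroup n | ¬ p ∣ orderOf g} =
        {g : QuaternionGroup n |
            ∃ j : ℕ, j < l ∧ g = QuaternionGroup.a ((j * p ^ t : ℕ) : ZMod (2 * n))}) := by
  haveI : NeZero n := ⟨hn.ne'⟩
  have hl : 0 < l := by
    rcases Nat.eq_zero_or_pos l with h | h
    · simp [h] at h2n; omega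
    · exact h
  have hpt : 0 < p ^ t := pow_pos hp.pos t
  -- main equivalence for a i
  have hmain : ∀ i : ZMod (2 * n), (¬ p ∣ orderOf (QuaternionGroup.a i) ↔
      ∃ j : ℕ, j < l ∧ i = ((j * p ^ t : ℕ) : ZMod (2 * n))) := by
    intro i
    have hk := key9 p l t i.val hp hpl hl
    rw [← h2n] at hk
    rw [QuaternionGroup.orderOf_a, hk]
    constructor
    · rintro ⟨w, hw⟩
      refine ⟨w, ?_, ?_⟩
      · have hvlt : i.val < l * p ^ t := lt_of_lt_of_eq i.val_lt h2n
        rw [hw] at hvlt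
        by_contra hc
        push_neg at hc
        have : l * p ^ t ≤ w * p ^ t := Nat.mul_le_mul_right _ hc
        have : w * p ^ t = p ^ t * w := mul_comm _ _
        omega
      · rw [Nat.mul_comm w, ← hw, ZMod.natCast_val, ZMod.cast_id]
    · rintro ⟨j, hj, rfl⟩
      have hlt : j * p ^ t < 2 * n := by
        rw [h2n]; exact (Nat.mul_lt_mul_right hpt).2 hj
      rw [ZMod.val_natCast_of_lt hlt]
      exact dvd_mul_left (p ^ t) j
  constructor
  · intro hp2
    ext g
    cases g with
    | a i =>
      simp only [Set.mem_setOf_eq, Set.mem_union, QuaternionGroup.a.injEq]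
      rw [hmain i]
      constructor
      · intro h; exact Or.inl h
      · rintro (h | ⟨i', h⟩)
        · exact h
        · exact absurd h (by simp)
    | xa i =>
      simp only [Set.mem_setOf_eq, Set.mem_union]
      rw [QuaternionGroup.orderOf_xa]
      constructor
      · intro _; exact Or.inr ⟨i, rfl⟩
      · intro _ hc
        exact hp2 ((Nat.prime_dvd_prime_iff_eq hp Nat.prime_two).1
          (hp.dvd_of_dvd_pow (show p ∣ 2 ^ 2 from hc)))
  · intro hp2
    subst hp2
    ext g
    cases g with
    | a i =>
      simp only [Set.mem_setOf_eq, QuaternionGroup.a.injEq]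
      rw [hmain i]
    | xa i =>
      simp only [Set.mem_setOf_eq]
      rw [QuaternionGroup.orderOf_xa]
      constructor
      · intro h; exact absurd (by norm_num) h
      · rintro ⟨j, hj, h⟩; exact absurd h (by simp)
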